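/- arXiv:2106.02404 — 5 statements merged into one kernel-verified Lean document; each statement's English description precedes it below -/
import Mathlib

section
/- Let X and E be real Banach spaces, let p ∈ X, let f : X → ℝ and g : X → E be maps that are continuously (Fréchet) differentiable on a neighborhood of p, with g(p) = 0 and with the derivative Dg(p) : X → E a surjective continuous linear map. Then the restriction of Df(p) to the kernel of Dg(p) is zero (i.e., p is a critical point of f restricted to the level set g⁻¹(0), whose tangent space at p is ker Dg(p)) if and only if there exists a continuous linear functional Λ ∈ E* such that Df(p) + Λ ∘ Dg(p) = 0 (i.e., p is a critical point of f + Λ ∘ g). -/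
/-- Lagrange multiplier theorem in Banach spaces: if `g : X → E` is `C¹` near `p` with
`g p = 0` and surjective derivative, and `f : X → ℝ` is `C¹` near `p`, then `Df(p)`
vanishes on `ker Dg(p)` (criticality of `f` restricted to `g⁻¹(0)`) if and only if
there is a continuous linear functional `Λ ∈ E*` with `Df(p) + Λ ∘ Dg(p) = 0`. -/
theorem lagrange_multiplier_banach {X E : Type*}
    [NormedAddCommGroup X] [NormedSpace ℝ X] [CompleteSpace X]
    [NormedAddCommGroup E] [NormedSpace ℝ E] [CompleteSpace E]
    (p : X) (f : X → ℝ) (g : X → E)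
    (U : Set X) (hU : U ∈ nhds p)
    (hf : ContDiffOn ℝ 1 f U) (hg : ContDiffOn ℝ 1 g U)
    (hgp : g p = 0)
    (hsurj : Function.Surjective (fderiv ℝ g p)) :
    (∀ x : X, fderiv ℝ g p x = 0 → fderiv ℝ f p x = 0) ↔
      ∃ Λ : E →L[ℝ] ℝ, fderiv ℝ f p + Λ.comp (fderiv ℝ g p) = 0 := by
  set T : X →L[ℝ] E := fderiv ℝ g p
  set φ : X →L[ℝ] ℝ := fderiv ℝ f p
  constructor
  · intro hker
    -- kernel inclusion
    have hle : LinearMap.ker (T : X →ₗ[ℝ] E) ≤ LinearMap.ker (φ : X →ₗ[ℝ] ℝ) := by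
      intro x hx
      exact hker x hx
    have hsurj' : Function.Surjective (T : X →ₗ[ℝ] E) := hsurj
    let e : (X ⧸ LinearMap.ker (T : X →ₗ[ℝ] E)) ≃ₗ[ℝ] E :=
      LinearMap.quotKerEquivOfSurjective _ hsurj'
    let Λ₀ : E →ₗ[ℝ] ℝ :=
      ((LinearMap.ker (T : X →ₗ[ℝ] E)).liftQ (φ : X →ₗ[ℝ] ℝ) hle).comp
        (e.symm : E →ₗ[ℝ] (X ⧸ LinearMap.ker (T : X →ₗ[ℝ] E)))
    have hcomp : ∀ x : X, Λ₀ (T x) = φ x := by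
      intro x
      have : e.symm (T x) = Submodule.Quotient.mk x := by
        apply e.injective
        simp only [LinearEquiv.apply_symm_apply]
        rfl
      simp [Λ₀, this]
    have hcont : Continuous Λ₀ := by
      rw [(T.isQuotientMap hsurj).continuous_iff]
      have : (Λ₀ ∘ T) = fun x => φ x := funext hcomp
      rw [this]
      exact φ.continuous
    refine ⟨-⟨Λ₀, hcont⟩, ?_⟩
    ext x
    simp [hcomp x]
  · rintro ⟨Λ, hΛ⟩ x hx
    have := congrFun (congrArg DFunLike.coe hΛ) x
    simpa [hx] using this
end

section
/- Let L : ℝⁿ × ℝⁿ × ℝ → ℝ be C², let (c, c_z) : [0,1] → ℝⁿ × ℝ be C² with c_z'(t) = L(c(t), c'(t), c_z(t)) for all t, and let λ : [0,1] → ℝ be C¹ with λ(1) = 1. Suppose that along (c(t), c'(t), c_z(t)): (i) for each i, d/dt[λ(t) ∂L/∂q̇ⁱ] − λ(t) ∂L/∂qⁱ = 0, and (ii) λ'(t) = −λ(t) ∂L/∂z. Then λ(t) > 0 for all t ∈ [0,1], and the pair (c, c_z) satisfies the Herglotz equations: for each i, d/dt[∂L/∂q̇ⁱ] − ∂L/∂qⁱ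 = (∂L/∂q̇ⁱ)(∂L/∂z) along (c(t), c'(t), c_z(t)). Conversely, if (c, c_z) satisfies the Herglotz equations, then λ(t) := exp(∫_t¹ ∂L/∂z(c(s), c'(s), c_z(s)) ds) satisfies (i), (ii) and λ(1) = 1. -/
open Set

open intervalIntegral MeasureTheory in
lemma ftc_left_icc (f : ℝ → ℝ) (hf : ContinuousOn f (Icc 0 1)) {t : ℝ} (ht : t ∈ Icc (0:ℝ) 1) :
    HasDerivWithinAt (fun τ => ∫ s in τ..(1:ℝ), f s) (-(f t)) (Icc 0 1) t := by
  set g : ℝ → ℝ := IccExtend zero_le_one ((Icc (0:ℝ) 1).restrict f) with hgdef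
  have hg : Continuous g := hf.restrict.Icc_extend'
  have hfg : ∀ x ∈ Icc (0:ℝ) 1, f x = g x := fun x hx => by
    rw [hgdef, IccExtend_of_mem zero_le_one _ hx]; rfl
  have h1 : HasDerivAt (fun τ => ∫ s in τ..(1:ℝ), g s) (-(g t)) t :=
    integral_hasDerivAt_left (hg.intervalIntegrable _ _)
      (hg.stronglyMeasurableAtFilter _ _) hg.continuousAt
  have h2 := h1.hasDerivWithinAt (s := Icc 0 1)
  have h3 : HasDerivWithinAt (fun τ => ∫ s in τ..(1:ℝ), f s) (-(g t)) (Icc 0 1) t := by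
    refine h2.congr (fun τ hτ => ?_) ?_
    · exact integral_congr fun s hs => hfg s
        (uIcc_subset_Icc (by exact hτ) (by constructor <;> norm_num) hs)
    · exact integral_congr fun s hs => hfg s
        (uIcc_subset_Icc (by exact ht) (by constructor <;> norm_num) hs)
  rwa [← hfg t ht] at h3

/-- Partial derivative of `L(q, q̇, z)` with respect to `qⁱ`. -/
noncomputable def pdQ {n : ℕ} (L : (Fin n → ℝ) × (Fin n → ℝ) × ℝ → ℝ) (i : Fin n)
    (p : (Fin n → ℝ) × (Fin n → ℝ) × ℝ) : ℝ :=
  fderiv ℝ L p (Pi.single i 1, 0, 0)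

/-- Partial derivative of `L(q, q̇, z)` with respect to `q̇ⁱ`. -/
noncomputable def pdQdot {n : ℕ} (L : (Fin n → ℝ) × (Fin n → ℝ) × ℝ → ℝ) (i : Fin n)
    (p : (Fin n → ℝ) × (Fin n → ℝ) × ℝ) : ℝ :=
  fderiv ℝ L p (0, Pi.single i 1, 0)

/-- Partial derivative of `L(q, q̇, z)` with respect to `z`. -/
noncomputable def pdZ {n : ℕ} (L : (Fin n → ℝ) × (Fin n → ℝ) × ℝ → ℝ)
    (p : (Fin n → ℝ) × (Fin n → ℝ) × ℝ) : ℝ :=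
  fderiv ℝ L p (0, 0, 1)

/-- The lifted curve `t ↦ (c(t), c'(t), c_z(t))`. -/
noncomputable def lift {n : ℕ} (c : ℝ → Fin n → ℝ) (cz : ℝ → ℝ) (t : ℝ) :
    (Fin n → ℝ) × (Fin n → ℝ) × ℝ :=
  (c t, derivWithin c (Icc 0 1) t, cz t)

/-- Equivalence between the Euler–Lagrange equations of the extended Lagrangian
`𝓛_λ = ż - λ(ż - L)` with natural boundary condition `λ(1) = 1`, and the Herglotz
equations: any multiplier `λ` satisfying (i) `d/dt[λ ∂L/∂q̇ⁱ] = λ ∂L/∂qⁱ` and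
(ii) `λ' = -λ ∂L/∂z` with `λ(1) = 1` is positive and forces the Herglotz equations;
conversely, the Herglotz equations give such a multiplier
`λ(t) = exp(∫_t¹ ∂L/∂z ds)`. -/
theorem extended_EL_iff_herglotz {n : ℕ}
    (L : (Fin n → ℝ) × (Fin n → ℝ) × ℝ → ℝ) (hL : ContDiff ℝ 2 L)
    (c : ℝ → Fin n → ℝ) (cz : ℝ → ℝ)
    (hreg : ContDiffOn ℝ 2 (fun t => (c t, cz t)) (Icc 0 1))
    (hode : ∀ t ∈ Icc (0:ℝ) 1,
      HasDerivWithinAt cz (L (lift c cz t)) (Icc 0 1) t) :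
    -- (i) & (ii) with λ(1)=1 imply positivity of λ and the Herglotz equations
    (∀ lam : ℝ → ℝ, ContDiffOn ℝ 1 lam (Icc 0 1) → lam 1 = 1 →
      (∀ i : Fin n, ∀ t ∈ Icc (0:ℝ) 1,
        HasDerivWithinAt (fun τ => lam τ * pdQdot L i (lift c cz τ))
          (lam t * pdQ L i (lift c cz t)) (Icc 0 1) t) →
      (∀ t ∈ Icc (0:ℝ) 1,
        HasDerivWithinAt lam (-(lam t * pdZ L (lift c cz t))) (Icc 0 1) t) →
      (∀ t ∈ Icc (0:ℝ) 1, 0 < lam t) ∧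
      (∀ i : Fin n, ∀ t ∈ Icc (0:ℝ) 1,
        HasDerivWithinAt (fun τ => pdQdot L i (lift c cz τ))
          (pdQ L i (lift c cz t) + pdQdot L i (lift c cz t) * pdZ L (lift c cz t))
          (Icc 0 1) t)) ∧
    -- conversely, Herglotz equations produce such a multiplier
    ((∀ i : Fin n, ∀ t ∈ Icc (0:ℝ) 1,
        HasDerivWithinAt (fun τ => pdQdot L i (lift c cz τ))
          (pdQ L i (lift c cz t) + pdQdot L i (lift c cz t) * pdZ L (lift c cz t))
          (Icc 0 1) t) →
      (∀ i : Fin n, ∀ t ∈ Icc (0:ℝ) 1,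
        HasDerivWithinAt
          (fun τ => Real.exp (∫ s in τ..(1:ℝ), pdZ L (lift c cz s)) *
            pdQdot L i (lift c cz τ))
          (Real.exp (∫ s in t..(1:ℝ), pdZ L (lift c cz s)) * pdQ L i (lift c cz t))
          (Icc 0 1) t) ∧
      (∀ t ∈ Icc (0:ℝ) 1,
        HasDerivWithinAt (fun τ => Real.exp (∫ s in τ..(1:ℝ), pdZ L (lift c cz s)))
          (-(Real.exp (∫ s in t..(1:ℝ), pdZ L (lift c cz s)) * pdZ L (lift c cz t)))
          (Icc 0 1) t) ∧
      Real.exp (∫ s in (1:ℝ)..(1:ℝ), pdZ L (lift c cz s)) = 1) := by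
  
  have hc2 : ContDiffOn ℝ 2 c (Icc 0 1) := (contDiff_fst (𝕜 := ℝ)).comp_contDiffOn hreg
  have hcz2 : ContDiffOn ℝ 2 cz (Icc 0 1) := (contDiff_snd (𝕜 := ℝ)).comp_contDiffOn hreg
  have hc' : ContDiffOn ℝ 1 (derivWithin c (Icc 0 1)) (Icc 0 1) :=
    hc2.derivWithin (uniqueDiffOn_Icc zero_lt_one) (by norm_num)
  have hlift : ContinuousOn (lift c cz) (Icc 0 1) := by
    unfold lift
    exact hc2.continuousOn.prodMk (hc'.continuousOn.prodMk hcz2.continuousOn)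
  have hfd : Continuous (fderiv ℝ L) := hL.continuous_fderiv (by norm_num)
  have hZcont : ContinuousOn (fun t => pdZ L (lift c cz t)) (Icc 0 1) := by
    unfold pdZ
    exact (hfd.clm_apply continuous_const).comp_continuousOn hlift
  set Z : ℝ → ℝ := fun t => pdZ L (lift c cz t) with hZdef
  set g : ℝ → ℝ := fun τ => ∫ s in τ..(1:ℝ), Z s with hgdef
  have hg : ∀ t ∈ Icc (0:ℝ) 1, HasDerivWithinAt g (-(Z t)) (Icc 0 1) t :=
    fun t ht => ftc_left_icc Z hZcont ht
  have hg1 : g 1 = 0 := intervalIntegral.integral_same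
  constructor
  · intro lam hlamC hlam1 hEL hlamODE
    have hconst : ∀ t ∈ Icc (0:ℝ) 1, lam t * Real.exp (-(g t)) = 1 := by
      have hD : ∀ t ∈ Icc (0:ℝ) 1,
          HasDerivWithinAt (fun τ => lam τ * Real.exp (-(g τ))) 0 (Icc 0 1) t := by
        intro t ht
        have hE : HasDerivWithinAt (fun τ => Real.exp (-(g τ)))
            (Real.exp (-(g t)) * (Z t)) (Icc 0 1) t := by
          have := ((hg t ht).neg).exp
          refine this.congr_deriv ?_
          simp only [Pi.neg_apply, neg_neg]
        have := (hlamODE t ht).mul hE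
        refine this.congr_deriv ?_
        ring
      have hdiff : DifferentiableOn ℝ (fun τ => lam τ * Real.exp (-(g τ))) (Icc 0 1) :=
        fun x hx => ((hD x hx).differentiableWithinAt)
      have hzero : ∀ x ∈ Ico (0:ℝ) 1,
          derivWithin (fun τ => lam τ * Real.exp (-(g τ))) (Icc 0 1) x = 0 := fun x hx =>
        (hD x (Ico_subset_Icc_self hx)).derivWithin
          (uniqueDiffOn_Icc zero_lt_one x (Ico_subset_Icc_self hx))
      have h0 := constant_of_derivWithin_zero hdiff hzero
      intro t ht
      have h1 := h0 t ht
      have h2 := h0 1 (by constructor <;> norm_num)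
      rw [h1, ← h2, hg1, hlam1]
      simp
    have hpos : ∀ t ∈ Icc (0:ℝ) 1, 0 < lam t := by
      intro t ht
      have h1 := hconst t ht
      nlinarith [Real.exp_pos (-(g t))]
    refine ⟨hpos, ?_⟩
    intro i t ht
    have hne : lam t ≠ 0 := (hpos t ht).ne'
    have hdiv := (hEL i t ht).div (hlamODE t ht) hne
    have heq : HasDerivWithinAt (fun τ => pdQdot L i (lift c cz τ))
        ((lam t * pdQ L i (lift c cz t) * lam t -
          lam t * pdQdot L i (lift c cz t) * -(lam t * pdZ L (lift c cz t))) / lam t ^ 2)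
        (Icc 0 1) t := by
      refine hdiv.congr (fun τ hτ => ?_) ?_
      · rw [Pi.div_apply, mul_div_cancel_left₀ _ (hpos τ hτ).ne']
      · rw [Pi.div_apply, mul_div_cancel_left₀ _ hne]
    convert heq using 1
    field_simp
    ring
  · intro hHer
    refine ⟨?_, ?_, ?_⟩
    · intro i t ht
      have hE : HasDerivWithinAt (fun τ => Real.exp (g τ))
          (Real.exp (g t) * (-(Z t))) (Icc 0 1) t := (hg t ht).exp
      have := hE.mul (hHer i t ht)
      refine this.congr_deriv ?_
      simp only [hZdef]
      ring
    · intro t ht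
      have := (hg t ht).exp
      refine this.congr_deriv ?_
      ring
    · rw [intervalIntegral.integral_same, Real.exp_zero]
end

section
/- Let L : ℝⁿ × ℝⁿ × ℝ → ℝ and ψ¹, …, ψᵏ : ℝⁿ × ℝⁿ × ℝ → ℝ be C² functions of (q, q̇, z), set φ⁰(q, z, q̇, ż) = ż − L(q, q̇, z) and φᵅ(q, z, q̇, ż) = ψᵅ(q, q̇, z) for α = 1,…,k. Let (c, c_z) : [0,1] → ℝⁿ × ℝ be C² and λ₀, …, λₖ : [0,1] → ℝ be C¹ with λ₀(t) ≠ 0 for all t. Define μ_α(t) = λ_α(t)/λ₀(t) and 𝓛_μ(q, q̇, z, t) = L(q, q̇, z) − Σ_α μ_α(t) ψᵅ(q, q̇, z). Then the following are equivalent: (A) along (c(t), c_z(t), c'(t), c_z'(t)) the vakonomic equations hold: for each i, d/dt[Σ_a λ_a ∂φᵃ/∂q̇ⁱ] − Σ_a λ_a ∂φᵃ/∂qⁱ = 0; d/dt[Σ_a λ_a ∂φᵃ/∂ż] − Σ_a λ_a ∂φᵃ/∂z = 0; and φᵃ = 0 for a = 0,…,k. (B) along (c(t), c'(t), c_z(t)):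 for each i, d/dt[∂𝓛_μ/∂q̇ⁱ] − ∂𝓛_μ/∂qⁱ = (∂𝓛_μ/∂q̇ⁱ)(∂𝓛_μ/∂z); ψᵅ(c, c', c_z) = 0 for α = 1,…,k; c_z' = 𝓛_μ(c, c', c_z, t); and λ₀'(t) = −λ₀(t) ∂𝓛_μ/∂z. -/
open Set

section PartialsVak
/-! Partial derivatives of constraints `φ(q, z, q̇, ż)` on `T(ℝⁿ × ℝ)`. -/

noncomputable def Dq {n : ℕ} (i : Fin n)
    (f : (Fin n → ℝ) × ℝ × (Fin n → ℝ) × ℝ → ℝ)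
    (p : (Fin n → ℝ) × ℝ × (Fin n → ℝ) × ℝ) : ℝ :=
  fderiv ℝ f p (Pi.single i 1, 0, 0, 0)

noncomputable def Dz {n : ℕ}
    (f : (Fin n → ℝ) × ℝ × (Fin n → ℝ) × ℝ → ℝ)
    (p : (Fin n → ℝ) × ℝ × (Fin n → ℝ) × ℝ) : ℝ :=
  fderiv ℝ f p (0, 1, 0, 0)

noncomputable def Dqdot {n : ℕ} (i : Fin n)
    (f : (Fin n → ℝ) × ℝ × (Fin n → ℝ) × ℝ → ℝ)
    (p : (Fin n → ℝ) × ℝ × (Fin n → ℝ) × ℝ) : ℝ :=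
  fderiv ℝ f p (0, 0, Pi.single i 1, 0)

noncomputable def Dzdot {n : ℕ}
    (f : (Fin n → ℝ) × ℝ × (Fin n → ℝ) × ℝ → ℝ)
    (p : (Fin n → ℝ) × ℝ × (Fin n → ℝ) × ℝ) : ℝ :=
  fderiv ℝ f p (0, 0, 0, 1)

end PartialsVak

section PartialsLag
/-! Partial derivatives of Lagrangian-type functions `F(q, q̇, z)` on `Tℝⁿ × ℝ`. -/

noncomputable def pQ {n : ℕ} (i : Fin n)
    (F : (Fin n → ℝ) × (Fin n → ℝ) × ℝ → ℝ)
    (p : (Fin n → ℝ) × (Fin n → ℝ) × ℝ) : ℝ :=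
  fderiv ℝ F p (Pi.single i 1, 0, 0)

noncomputable def pQdot {n : ℕ} (i : Fin n)
    (F : (Fin n → ℝ) × (Fin n → ℝ) × ℝ → ℝ)
    (p : (Fin n → ℝ) × (Fin n → ℝ) × ℝ) : ℝ :=
  fderiv ℝ F p (0, Pi.single i 1, 0)

noncomputable def pZ {n : ℕ}
    (F : (Fin n → ℝ) × (Fin n → ℝ) × ℝ → ℝ)
    (p : (Fin n → ℝ) × (Fin n → ℝ) × ℝ) : ℝ :=
  fderiv ℝ F p (0, 0, 1)

end PartialsLag

/-- The lifted curve `t ↦ (c(t), c_z(t), c'(t), c_z'(t))` in `T(ℝⁿ × ℝ)`. -/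
noncomputable def Gam {n : ℕ} (c : ℝ → Fin n → ℝ) (cz : ℝ → ℝ) (t : ℝ) :
    (Fin n → ℝ) × ℝ × (Fin n → ℝ) × ℝ :=
  (c t, cz t, derivWithin c (Icc 0 1) t, derivWithin cz (Icc 0 1) t)

/-- The lifted curve `t ↦ (c(t), c'(t), c_z(t))` in `Tℝⁿ × ℝ`. -/
noncomputable def liftQ {n : ℕ} (c : ℝ → Fin n → ℝ) (cz : ℝ → ℝ) (t : ℝ) :
    (Fin n → ℝ) × (Fin n → ℝ) × ℝ :=
  (c t, derivWithin c (Icc 0 1) t, cz t)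


noncomputable def gmap (n : ℕ) :
    ((Fin n → ℝ) × ℝ × (Fin n → ℝ) × ℝ) →L[ℝ] ((Fin n → ℝ) × (Fin n → ℝ) × ℝ) :=
  (ContinuousLinearMap.fst ℝ (Fin n → ℝ) (ℝ × (Fin n → ℝ) × ℝ)).prod
    (((ContinuousLinearMap.fst ℝ (Fin n → ℝ) ℝ).comp
        ((ContinuousLinearMap.snd ℝ ℝ ((Fin n → ℝ) × ℝ)).comp
          (ContinuousLinearMap.snd ℝ (Fin n → ℝ) (ℝ × (Fin n → ℝ) × ℝ)))).prod
      ((ContinuousLinearMap.fst ℝ ℝ ((Fin n → ℝ) × ℝ)).comp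
        (ContinuousLinearMap.snd ℝ (Fin n → ℝ) (ℝ × (Fin n → ℝ) × ℝ))))

noncomputable def zmap (n : ℕ) : ((Fin n → ℝ) × ℝ × (Fin n → ℝ) × ℝ) →L[ℝ] ℝ :=
  (ContinuousLinearMap.snd ℝ (Fin n → ℝ) ℝ).comp
    ((ContinuousLinearMap.snd ℝ ℝ ((Fin n → ℝ) × ℝ)).comp
      (ContinuousLinearMap.snd ℝ (Fin n → ℝ) (ℝ × (Fin n → ℝ) × ℝ)))

lemma fderiv_comp_g {n : ℕ} (ψ : (Fin n → ℝ) × (Fin n → ℝ) × ℝ → ℝ)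
    (hψ : Differentiable ℝ ψ) (p : (Fin n → ℝ) × ℝ × (Fin n → ℝ) × ℝ)
    (v : (Fin n → ℝ) × ℝ × (Fin n → ℝ) × ℝ) :
    fderiv ℝ (fun p => ψ (p.1, p.2.2.1, p.2.1)) p v
      = fderiv ℝ ψ (p.1, p.2.2.1, p.2.1) (v.1, v.2.2.1, v.2.1) := by
  have h : HasFDerivAt (fun p : (Fin n → ℝ) × ℝ × (Fin n → ℝ) × ℝ => ψ (p.1, p.2.2.1, p.2.1))
      ((fderiv ℝ ψ (p.1, p.2.2.1, p.2.1)).comp (gmap n)) p :=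
    ((hψ _).hasFDerivAt).comp p (gmap n).hasFDerivAt
  rw [h.fderiv]; rfl

lemma fderiv_phi0 {n : ℕ} (L : (Fin n → ℝ) × (Fin n → ℝ) × ℝ → ℝ)
    (hL : Differentiable ℝ L) (p v : (Fin n → ℝ) × ℝ × (Fin n → ℝ) × ℝ) :
    fderiv ℝ (fun p : (Fin n → ℝ) × ℝ × (Fin n → ℝ) × ℝ => p.2.2.2 - L (p.1, p.2.2.1, p.2.1)) p v
      = v.2.2.2 - fderiv ℝ L (p.1, p.2.2.1, p.2.1) (v.1, v.2.2.1, v.2.1) := by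
  have hw : HasFDerivAt (fun p : (Fin n → ℝ) × ℝ × (Fin n → ℝ) × ℝ => p.2.2.2) (zmap n) p :=
    (zmap n).hasFDerivAt
  have hg : HasFDerivAt (fun p : (Fin n → ℝ) × ℝ × (Fin n → ℝ) × ℝ => L (p.1, p.2.2.1, p.2.1))
      ((fderiv ℝ L (p.1, p.2.2.1, p.2.1)).comp (gmap n)) p :=
    ((hL _).hasFDerivAt).comp p (gmap n).hasFDerivAt
  rw [(hw.fun_sub hg).fderiv]; rfl

lemma fderiv_sub_sum {n k : ℕ} (L : (Fin n → ℝ) × (Fin n → ℝ) × ℝ → ℝ)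
    (hL : Differentiable ℝ L) (ψ : Fin k → (Fin n → ℝ) × (Fin n → ℝ) × ℝ → ℝ)
    (hψ : ∀ α, Differentiable ℝ (ψ α)) (m : Fin k → ℝ)
    (q v : (Fin n → ℝ) × (Fin n → ℝ) × ℝ) :
    fderiv ℝ (fun p => L p - ∑ α, m α * ψ α p) q v
      = fderiv ℝ L q v - ∑ α, m α * fderiv ℝ (ψ α) q v := by
  have h : HasFDerivAt (fun p => L p - ∑ α, m α * ψ α p)
      (fderiv ℝ L q - ∑ α, m α • fderiv ℝ (ψ α) q) q := by
    apply (hL q).hasFDerivAt.sub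
    apply HasFDerivAt.fun_sum
    intro α _
    exact ((hψ α q).hasFDerivAt).const_mul (m α)
  rw [h.fderiv]
  simp

lemma alg_sum {k : ℕ} (b : ℝ) (hb : b ≠ 0) (A : ℝ) (lamS y : Fin k → ℝ) :
    b * (0 - A) + ∑ α, lamS α * y α = -(b * (A - ∑ α, lamS α / b * y α)) := by
  have hS : b * ∑ α, lamS α / b * y α = ∑ α, lamS α * y α := by
    rw [Finset.mul_sum]
    exact Finset.sum_congr rfl fun α _ => by field_simp
  rw [mul_sub b A, neg_sub, hS]
  ring

/-- Equivalence between (A) the vakonomic Euler–Lagrange equations with multipliers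
`λ₀,…,λₖ` for the constraints `φ⁰ = ż - L`, `φᵅ = ψᵅ`, and (B) the Herglotz-type
equations for the normalized time-dependent Lagrangian `𝓛_μ = L - μ_α ψᵅ` with
`μ_α = λ_α / λ₀`, together with the constraints, the action equation
`c_z' = 𝓛_μ`, and the multiplier equation `λ₀' = -λ₀ ∂𝓛_μ/∂z`. -/
theorem vakonomic_iff_herglotz_normalized {n k : ℕ}
    (L : (Fin n → ℝ) × (Fin n → ℝ) × ℝ → ℝ) (hL : ContDiff ℝ 2 L)
    (ψ : Fin k → (Fin n → ℝ) × (Fin n → ℝ) × ℝ → ℝ) (hψ : ∀ α, ContDiff ℝ 2 (ψ α))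
    (φ : Fin (k + 1) → (Fin n → ℝ) × ℝ × (Fin n → ℝ) × ℝ → ℝ)
    (hφ : φ = Fin.cons (fun p => p.2.2.2 - L (p.1, p.2.2.1, p.2.1))
      (fun α p => ψ α (p.1, p.2.2.1, p.2.1)))
    (c : ℝ → Fin n → ℝ) (cz : ℝ → ℝ)
    (hreg : ContDiffOn ℝ 2 (fun t => (c t, cz t)) (Icc 0 1))
    (lam : Fin (k + 1) → ℝ → ℝ) (hlam : ∀ a, ContDiffOn ℝ 1 (lam a) (Icc 0 1))
    (hlam0 : ∀ t ∈ Icc (0:ℝ) 1, lam 0 t ≠ 0) :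
    -- (A): the vakonomic equations with multipliers λ₀, …, λₖ ...
    ((∀ i : Fin n, ∀ t ∈ Icc (0:ℝ) 1,
        HasDerivWithinAt (fun τ => ∑ a, lam a τ * Dqdot i (φ a) (Gam c cz τ))
          (∑ a, lam a t * Dq i (φ a) (Gam c cz t)) (Icc 0 1) t) ∧
     (∀ t ∈ Icc (0:ℝ) 1,
        HasDerivWithinAt (fun τ => ∑ a, lam a τ * Dzdot (φ a) (Gam c cz τ))
          (∑ a, lam a t * Dz (φ a) (Gam c cz t)) (Icc 0 1) t) ∧
     (∀ a, ∀ t ∈ Icc (0:ℝ) 1, φ a (Gam c cz t) = 0))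
    ↔
    -- (B): Herglotz-type equations for 𝓛_μ = L - μ_α ψᵅ, with μ_α = λ_α/λ₀
    ((∀ i : Fin n, ∀ t ∈ Icc (0:ℝ) 1,
        HasDerivWithinAt
          (fun τ => pQdot i (fun p => L p - ∑ α, (lam α.succ τ / lam 0 τ) * ψ α p)
            (liftQ c cz τ))
          (pQ i (fun p => L p - ∑ α, (lam α.succ t / lam 0 t) * ψ α p) (liftQ c cz t) +
            pQdot i (fun p => L p - ∑ α, (lam α.succ t / lam 0 t) * ψ α p)
              (liftQ c cz t) *
            pZ (fun p => L p - ∑ α, (lam α.succ t / lam 0 t) * ψ α p) (liftQ c cz t))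
          (Icc 0 1) t) ∧
     (∀ α, ∀ t ∈ Icc (0:ℝ) 1, ψ α (liftQ c cz t) = 0) ∧
     (∀ t ∈ Icc (0:ℝ) 1,
        HasDerivWithinAt cz
          (L (liftQ c cz t) - ∑ α, (lam α.succ t / lam 0 t) * ψ α (liftQ c cz t))
          (Icc 0 1) t) ∧
     (∀ t ∈ Icc (0:ℝ) 1,
        HasDerivWithinAt (lam 0)
          (-(lam 0 t *
            pZ (fun p => L p - ∑ α, (lam α.succ t / lam 0 t) * ψ α p) (liftQ c cz t)))
          (Icc 0 1) t)) := by
  have hLd : Differentiable ℝ L := hL.differentiable two_ne_zero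
  have hψd : ∀ α, Differentiable ℝ (ψ α) := fun α => (hψ α).differentiable two_ne_zero
  have hφ0 : φ 0 = fun p => p.2.2.2 - L (p.1, p.2.2.1, p.2.1) := by
    rw [hφ]; exact Fin.cons_zero _ _
  have hφs : ∀ α : Fin k, φ α.succ = fun p => ψ α (p.1, p.2.2.1, p.2.1) := by
    intro α; rw [hφ]; exact Fin.cons_succ _ _ _
  have hφ0G : ∀ τ : ℝ, φ 0 (Gam c cz τ)
      = derivWithin cz (Icc 0 1) τ - L (liftQ c cz τ) := by
    intro τ; rw [hφ0]; rfl
  have hφsG : ∀ (α : Fin k) (τ : ℝ), φ α.succ (Gam c cz τ) = ψ α (liftQ c cz τ) := by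
    intro α τ; rw [hφs α]; rfl
  have key : ∀ w : (Fin n → ℝ) × ℝ × (Fin n → ℝ) × ℝ, w.2.2.2 = 0 →
      ∀ τ ∈ Icc (0:ℝ) 1,
      (∑ a, lam a τ * fderiv ℝ (φ a) (Gam c cz τ) w)
        = -(lam 0 τ * fderiv ℝ
            (fun p => L p - ∑ α, (lam α.succ τ / lam 0 τ) * ψ α p)
            (liftQ c cz τ) (w.1, w.2.2.1, w.2.1)) := by
    intro w hw τ hτ
    have h0 := hlam0 τ hτ
    have hsum : (∑ α : Fin k, lam α.succ τ * fderiv ℝ (φ α.succ) (Gam c cz τ) w)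
        = ∑ α : Fin k, lam α.succ τ * fderiv ℝ (ψ α) (liftQ c cz τ) (w.1, w.2.2.1, w.2.1) :=
      Finset.sum_congr rfl fun α _ => by
        rw [hφs α, fderiv_comp_g (ψ α) (hψd α)]; rfl
    rw [Fin.sum_univ_succ, hsum, hφ0, fderiv_phi0 L hLd, hw,
      fderiv_sub_sum L hLd ψ hψd]
    exact alg_sum (lam 0 τ) h0
      (fderiv ℝ L (liftQ c cz τ) (w.1, w.2.2.1, w.2.1))
      (fun α => lam α.succ τ)
      (fun α => fderiv ℝ (ψ α) (liftQ c cz τ) (w.1, w.2.2.1, w.2.1))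
  have hS : ∀ (i : Fin n), ∀ τ ∈ Icc (0:ℝ) 1,
      (∑ a, lam a τ * Dqdot i (φ a) (Gam c cz τ))
        = -(lam 0 τ * pQdot i (fun p => L p - ∑ α, (lam α.succ τ / lam 0 τ) * ψ α p)
            (liftQ c cz τ)) := by
    intro i τ hτ
    simpa [Dqdot, pQdot] using key (0, 0, Pi.single i 1, 0) rfl τ hτ
  have hSq : ∀ (i : Fin n), ∀ τ ∈ Icc (0:ℝ) 1,
      (∑ a, lam a τ * Dq i (φ a) (Gam c cz τ))
        = -(lam 0 τ * pQ i (fun p => L p - ∑ α, (lam α.succ τ / lam 0 τ) * ψ α p)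
            (liftQ c cz τ)) := by
    intro i τ hτ
    simpa [Dq, pQ] using key (Pi.single i 1, 0, 0, 0) rfl τ hτ
  have hSz : ∀ τ ∈ Icc (0:ℝ) 1,
      (∑ a, lam a τ * Dz (φ a) (Gam c cz τ))
        = -(lam 0 τ * pZ (fun p => L p - ∑ α, (lam α.succ τ / lam 0 τ) * ψ α p)
            (liftQ c cz τ)) := by
    intro τ hτ
    simpa [Dz, pZ] using key (0, 1, 0, 0) rfl τ hτ
  have hSzd : ∀ τ : ℝ,
      (∑ a, lam a τ * Dzdot (φ a) (Gam c cz τ)) = lam 0 τ := by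
    intro τ
    have hsum : (∑ α : Fin k, lam α.succ τ * Dzdot (φ α.succ) (Gam c cz τ)) = 0 := by
      apply Finset.sum_eq_zero
      intro α _
      have h : Dzdot (φ α.succ) (Gam c cz τ) = 0 := by
        simp only [Dzdot, hφs α]
        rw [fderiv_comp_g (ψ α) (hψd α)]
        exact (fderiv ℝ (ψ α) _).map_zero
      rw [h, mul_zero]
    rw [Fin.sum_univ_succ, hsum, add_zero]
    simp only [Dzdot, hφ0]
    rw [fderiv_phi0 L hLd]
    show lam 0 τ * ((1:ℝ) - fderiv ℝ L
      ((Gam c cz τ).1, (Gam c cz τ).2.2.1, (Gam c cz τ).2.1) 0) = lam 0 τ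
    rw [map_zero, sub_zero, mul_one]
  constructor
  · rintro ⟨hA1, hA2, hA3⟩
    have hψ0 : ∀ (α : Fin k), ∀ t ∈ Icc (0:ℝ) 1, ψ α (liftQ c cz t) = 0 := by
      intro α t ht
      rw [← hφsG α t]
      exact hA3 α.succ t ht
    have hB4 : ∀ t ∈ Icc (0:ℝ) 1,
        HasDerivWithinAt (lam 0)
          (-(lam 0 t * pZ (fun p => L p - ∑ α, (lam α.succ t / lam 0 t) * ψ α p)
            (liftQ c cz t))) (Icc 0 1) t := by
      intro t ht
      have h := hA2 t ht
      rw [hSz t ht] at h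
      exact h.congr (fun τ _ => (hSzd τ).symm) (hSzd t).symm
    refine ⟨?_, hψ0, ?_, hB4⟩
    · intro i t ht
      have h0 := hlam0 t ht
      have h1 := (hA1 i t ht).congr (fun τ hτ => (hS i τ hτ).symm) ((hS i t ht).symm)
      have h2 := h1.fun_neg
      rw [hSq i t ht] at h2
      simp only [neg_neg] at h2
      have hdiv := h2.fun_div (hB4 t ht) h0
      have hEq : ∀ τ ∈ Icc (0:ℝ) 1,
          pQdot i (fun p => L p - ∑ α, (lam α.succ τ / lam 0 τ) * ψ α p) (liftQ c cz τ)
            = (lam 0 τ * pQdot i (fun p => L p - ∑ α, (lam α.succ τ / lam 0 τ) * ψ α p)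
                (liftQ c cz τ)) / lam 0 τ :=
        fun τ hτ => (mul_div_cancel_left₀ _ (hlam0 τ hτ)).symm
      have h3 := hdiv.congr hEq (hEq t ht)
      refine h3.congr_deriv ?_
      field_simp
      ring
    · intro t ht
      have hd : DifferentiableWithinAt ℝ cz (Icc 0 1) t := by
        have h := (hreg.differentiableOn two_ne_zero t ht).snd
        simpa using h
      have hzero := hA3 0 t ht
      rw [hφ0G t] at hzero
      have hdw : derivWithin cz (Icc 0 1) t = L (liftQ c cz t) := by linarith
      have hs0 : (∑ α, (lam α.succ t / lam 0 t) * ψ α (liftQ c cz t)) = 0 :=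
        Finset.sum_eq_zero fun α _ => by rw [hψ0 α t ht, mul_zero]
      rw [hs0, sub_zero, ← hdw]
      exact hd.hasDerivWithinAt
  · rintro ⟨hB1, hB2, hB3, hB4⟩
    refine ⟨?_, ?_, ?_⟩
    · intro i t ht
      have hprod := (hB4 t ht).fun_mul (hB1 i t ht)
      have hneg := hprod.fun_neg
      have hcg := hneg.congr (fun τ hτ => hS i τ hτ) (hS i t ht)
      refine hcg.congr_deriv ?_
      rw [hSq i t ht]
      ring
    · intro t ht
      rw [hSz t ht]
      exact (hB4 t ht).congr (fun τ _ => hSzd τ) (hSzd t)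
    · intro a t ht
      rcases Fin.eq_zero_or_eq_succ a with rfl | ⟨α, rfl⟩
      · rw [hφ0G t]
        have hdw := (hB3 t ht).derivWithin ((uniqueDiffOn_Icc zero_lt_one) t ht)
        rw [hdw]
        have hs0 : (∑ α, (lam α.succ t / lam 0 t) * ψ α (liftQ c cz t)) = 0 :=
          Finset.sum_eq_zero fun α _ => by rw [hB2 α t ht, mul_zero]
        rw [hs0, sub_zero, sub_self]
      · rw [hφsG α t]
        exact hB2 α t ht
end

section
/- Let L : ℝⁿ × ℝⁿ × ℝ → ℝ and ψ¹, …, ψᵏ : ℝⁿ × ℝⁿ × ℝ → ℝ be C² functions of (q, q̇, z), and define the extended contact Lagrangian 𝓛 : (ℝⁿ × ℝᵏ) × (ℝⁿ × ℝᵏ) × ℝ → ℝ by 𝓛(q, μ, q̇, μ̇, z) = L(q, q̇, z) − Σ_α μ_α ψᵅ(q, q̇, z). Let (c, m) : [0,1] → ℝⁿ × ℝᵏ be C² and c_z : [0,1] → ℝ be C¹ with c_z'(t) = 𝓛(c(t), m(t), c'(t), m'(t), c_z(t)) for all t. Then (c, m, c_z) satisfies the Herglotz equations for 𝓛 in all n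 + k configuration variables if and only if along (c(t), c'(t), c_z(t)): (i) ψᵅ(c, c', c_z) = 0 for α = 1,…,k; (ii) c_z' = L(c, c', c_z) − Σ_α m_α(t) ψᵅ(c, c', c_z) = L(c, c', c_z); and (iii) for each i, d/dt[∂𝓛_m/∂q̇ⁱ] − ∂𝓛_m/∂qⁱ = (∂𝓛_m/∂q̇ⁱ)(∂𝓛_m/∂z), where 𝓛_m(q, q̇, z, t) = L(q, q̇, z) − Σ_α m_α(t) ψᵅ(q, q̇, z). -/
open Set

/-- The lifted curve of `(c, m)` with action `c_z` in
`T(ℝⁿ × ℝᵏ) × ℝ`, the phase space of the extended Lagrangian. -/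
noncomputable def liftExt {n k : ℕ} (c : ℝ → Fin n → ℝ) (m : ℝ → Fin k → ℝ)
    (cz : ℝ → ℝ) (t : ℝ) :
    ((Fin n → ℝ) × (Fin k → ℝ)) × ((Fin n → ℝ) × (Fin k → ℝ)) × ℝ :=
  ((c t, m t), (derivWithin c (Icc 0 1) t, derivWithin m (Icc 0 1) t), cz t)

lemma fderiv_Lm {n k : ℕ}
    (L : (Fin n → ℝ) × (Fin n → ℝ) × ℝ → ℝ) (hL : ContDiff ℝ 2 L)
    (ψ : Fin k → (Fin n → ℝ) × (Fin n → ℝ) × ℝ → ℝ) (hψ : ∀ α, ContDiff ℝ 2 (ψ α))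
    (c : Fin k → ℝ) (x w : (Fin n → ℝ) × (Fin n → ℝ) × ℝ) :
    fderiv ℝ (fun p => L p - ∑ α, c α * ψ α p) x w
      = fderiv ℝ L x w - ∑ α, c α * fderiv ℝ (ψ α) x w := by
  have hLx := ((hL.differentiable two_ne_zero) x).hasFDerivAt
  have hterm : ∀ α ∈ Finset.univ, HasFDerivAt (fun p => c α * ψ α p)
      (c α • fderiv ℝ (ψ α) x) x :=
    fun α _ => (((hψ α).differentiable two_ne_zero) x).hasFDerivAt.const_mul (c α)
  have htot := hLx.fun_sub (HasFDerivAt.fun_sum hterm)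
  rw [htot.fderiv]
  simp


section
variable {n k : ℕ}

private abbrev E' (n : ℕ) := Fin n → ℝ

noncomputable def Gmap (n k : ℕ) :
    ((E' n × E' k) × (E' n × E' k) × ℝ) →L[ℝ] (E' n × E' n × ℝ) :=
  ((ContinuousLinearMap.fst ℝ (E' n) (E' k)).comp
      (ContinuousLinearMap.fst ℝ (E' n × E' k) ((E' n × E' k) × ℝ))).prod
    ((((ContinuousLinearMap.fst ℝ (E' n) (E' k)).comp
        ((ContinuousLinearMap.fst ℝ (E' n × E' k) ℝ).comp
          (ContinuousLinearMap.snd ℝ (E' n × E' k) ((E' n × E' k) × ℝ)))).prod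
      ((ContinuousLinearMap.snd ℝ (E' n × E' k) ℝ).comp
        (ContinuousLinearMap.snd ℝ (E' n × E' k) ((E' n × E' k) × ℝ)))))

noncomputable def Hmap (n k : ℕ) (α : Fin k) :
    ((E' n × E' k) × (E' n × E' k) × ℝ) →L[ℝ] ℝ :=
  (ContinuousLinearMap.proj α).comp
    ((ContinuousLinearMap.snd ℝ (E' n) (E' k)).comp
      (ContinuousLinearMap.fst ℝ (E' n × E' k) ((E' n × E' k) × ℝ)))

lemma fderiv_extL
    (L : (Fin n → ℝ) × (Fin n → ℝ) × ℝ → ℝ) (hL : ContDiff ℝ 2 L)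
    (ψ : Fin k → (Fin n → ℝ) × (Fin n → ℝ) × ℝ → ℝ) (hψ : ∀ α, ContDiff ℝ 2 (ψ α))
    (P v : ((Fin n → ℝ) × (Fin k → ℝ)) × ((Fin n → ℝ) × (Fin k → ℝ)) × ℝ) :
    fderiv ℝ (fun p => L (p.1.1, p.2.1.1, p.2.2)
        - ∑ α, p.1.2 α * ψ α (p.1.1, p.2.1.1, p.2.2)) P v
      = fderiv ℝ L (P.1.1, P.2.1.1, P.2.2) (v.1.1, v.2.1.1, v.2.2)
        - ∑ α, (v.1.2 α * ψ α (P.1.1, P.2.1.1, P.2.2)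
            + P.1.2 α * fderiv ℝ (ψ α) (P.1.1, P.2.1.1, P.2.2) (v.1.1, v.2.1.1, v.2.2)) := by
  have hg : HasFDerivAt
      (fun p : ((Fin n → ℝ) × (Fin k → ℝ)) × ((Fin n → ℝ) × (Fin k → ℝ)) × ℝ =>
        ((p.1.1, p.2.1.1, p.2.2) : (Fin n → ℝ) × (Fin n → ℝ) × ℝ)) (Gmap n k) P :=
    (Gmap n k).hasFDerivAt
  have hLg := ((hL.differentiable two_ne_zero) (P.1.1, P.2.1.1, P.2.2)).hasFDerivAt.comp P hg
  have hterm : ∀ α ∈ Finset.univ, HasFDerivAt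
      (fun p : ((Fin n → ℝ) × (Fin k → ℝ)) × ((Fin n → ℝ) × (Fin k → ℝ)) × ℝ =>
        p.1.2 α * ψ α (p.1.1, p.2.1.1, p.2.2))
      (P.1.2 α • ((fderiv ℝ (ψ α) (P.1.1, P.2.1.1, P.2.2)).comp (Gmap n k))
        + ψ α (P.1.1, P.2.1.1, P.2.2) • Hmap n k α) P := by
    intro α _
    have hH : HasFDerivAt
        (fun p : ((Fin n → ℝ) × (Fin k → ℝ)) × ((Fin n → ℝ) × (Fin k → ℝ)) × ℝ =>
          p.1.2 α) (Hmap n k α) P := (Hmap n k α).hasFDerivAt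
    have hψg := (((hψ α).differentiable two_ne_zero) (P.1.1, P.2.1.1, P.2.2)).hasFDerivAt.comp P hg
    exact hH.mul hψg
  have htot := hLg.fun_sub (HasFDerivAt.fun_sum hterm)
  have htot' : HasFDerivAt
      (fun p : ((Fin n → ℝ) × (Fin k → ℝ)) × ((Fin n → ℝ) × (Fin k → ℝ)) × ℝ =>
        L (p.1.1, p.2.1.1, p.2.2) - ∑ α, p.1.2 α * ψ α (p.1.1, p.2.1.1, p.2.2)) _ P := htot
  rw [htot'.fderiv]
  simp only [Gmap, Hmap, ContinuousLinearMap.sub_apply, ContinuousLinearMap.comp_apply,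
    ContinuousLinearMap.sum_apply, ContinuousLinearMap.add_apply,
    ContinuousLinearMap.smul_apply, ContinuousLinearMap.prod_apply,
    ContinuousLinearMap.coe_fst', ContinuousLinearMap.coe_snd',
    ContinuousLinearMap.proj_apply, smul_eq_mul]
  congr 1
  exact Finset.sum_congr rfl fun α _ => by ring

end


/-- Vakonomic contact dynamics via an extended Lagrangian: a curve `(c, m)` with action
`c_z` satisfying `c_z' = 𝓛(c, m, c', m', c_z)` satisfies the Herglotz equations of the
extended contact Lagrangian `𝓛(q, μ, q̇, μ̇, z) = L(q, q̇, z) - Σ_α μ_α ψᵅ(q, q̇, z)` in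
all `n + k` configuration variables if and only if (i) the constraints `ψᵅ = 0` hold,
(ii) `c_z' = L(c, c', c_z)`, and (iii) the Herglotz equations for the time-dependent
Lagrangian `𝓛_m = L - m_α(t) ψᵅ` hold in the variables `q`. -/
theorem extended_lagrangian_herglotz_iff {n k : ℕ}
    (L : (Fin n → ℝ) × (Fin n → ℝ) × ℝ → ℝ) (hL : ContDiff ℝ 2 L)
    (ψ : Fin k → (Fin n → ℝ) × (Fin n → ℝ) × ℝ → ℝ) (hψ : ∀ α, ContDiff ℝ 2 (ψ α))
    (ExtL : ((Fin n → ℝ) × (Fin k → ℝ)) × ((Fin n → ℝ) × (Fin k → ℝ)) × ℝ → ℝ)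
    (hExtL : ExtL = fun p =>
      L (p.1.1, p.2.1.1, p.2.2) - ∑ α, p.1.2 α * ψ α (p.1.1, p.2.1.1, p.2.2))
    (c : ℝ → Fin n → ℝ) (m : ℝ → Fin k → ℝ) (cz : ℝ → ℝ)
    (hreg : ContDiffOn ℝ 2 (fun t => (c t, m t)) (Icc 0 1))
    (hcz : ContDiffOn ℝ 1 cz (Icc 0 1))
    (hode : ∀ t ∈ Icc (0:ℝ) 1,
      HasDerivWithinAt cz (ExtL (liftExt c m cz t)) (Icc 0 1) t) :
    -- Herglotz equations for 𝓛 in all n + k configuration variables ...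
    ((∀ i : Fin n, ∀ t ∈ Icc (0:ℝ) 1,
        HasDerivWithinAt
          (fun τ => fderiv ℝ ExtL (liftExt c m cz τ) ((0, 0), (Pi.single i 1, 0), 0))
          (fderiv ℝ ExtL (liftExt c m cz t) ((Pi.single i 1, 0), (0, 0), 0) +
            fderiv ℝ ExtL (liftExt c m cz t) ((0, 0), (Pi.single i 1, 0), 0) *
              fderiv ℝ ExtL (liftExt c m cz t) ((0, 0), (0, 0), 1))
          (Icc 0 1) t) ∧
     (∀ α : Fin k, ∀ t ∈ Icc (0:ℝ) 1,
        HasDerivWithinAt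
          (fun τ => fderiv ℝ ExtL (liftExt c m cz τ) ((0, 0), (0, Pi.single α 1), 0))
          (fderiv ℝ ExtL (liftExt c m cz t) ((0, Pi.single α 1), (0, 0), 0) +
            fderiv ℝ ExtL (liftExt c m cz t) ((0, 0), (0, Pi.single α 1), 0) *
              fderiv ℝ ExtL (liftExt c m cz t) ((0, 0), (0, 0), 1))
          (Icc 0 1) t))
    ↔
    -- ... iff (i) the constraints hold, (ii) c_z' = L, and (iii) the Herglotz
    -- equations for the time-dependent Lagrangian 𝓛_m hold
    ((∀ α : Fin k, ∀ t ∈ Icc (0:ℝ) 1, ψ α (liftQ c cz t) = 0) ∧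
     (∀ t ∈ Icc (0:ℝ) 1,
        HasDerivWithinAt cz (L (liftQ c cz t)) (Icc 0 1) t) ∧
     (∀ i : Fin n, ∀ t ∈ Icc (0:ℝ) 1,
        HasDerivWithinAt
          (fun τ => pQdot i (fun p => L p - ∑ α, m τ α * ψ α p) (liftQ c cz τ))
          (pQ i (fun p => L p - ∑ α, m t α * ψ α p) (liftQ c cz t) +
            pQdot i (fun p => L p - ∑ α, m t α * ψ α p) (liftQ c cz t) *
              pZ (fun p => L p - ∑ α, m t α * ψ α p) (liftQ c cz t))
          (Icc 0 1) t)) := by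
  -- directional derivative computations along the lifted curve
  have hEq : ∀ (τ : ℝ) (i : Fin n),
      fderiv ℝ ExtL (liftExt c m cz τ) ((Pi.single i 1, 0), (0, 0), 0)
        = pQ i (fun p => L p - ∑ α, m τ α * ψ α p) (liftQ c cz τ) := by
    intro τ i
    rw [hExtL, fderiv_extL L hL ψ hψ]
    simp only [pQ, fderiv_Lm L hL ψ hψ, liftExt, liftQ]
    simp
  have hEqdot : ∀ (τ : ℝ) (i : Fin n),
      fderiv ℝ ExtL (liftExt c m cz τ) ((0, 0), (Pi.single i 1, 0), 0)
        = pQdot i (fun p => L p - ∑ α, m τ α * ψ α p) (liftQ c cz τ) := by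
    intro τ i
    rw [hExtL, fderiv_extL L hL ψ hψ]
    simp only [pQdot, fderiv_Lm L hL ψ hψ, liftExt, liftQ]
    simp
  have hEz : ∀ (τ : ℝ),
      fderiv ℝ ExtL (liftExt c m cz τ) ((0, 0), (0, 0), 1)
        = pZ (fun p => L p - ∑ α, m τ α * ψ α p) (liftQ c cz τ) := by
    intro τ
    rw [hExtL, fderiv_extL L hL ψ hψ]
    simp only [pZ, fderiv_Lm L hL ψ hψ, liftExt, liftQ]
    simp
  have hEmu : ∀ (τ : ℝ) (α : Fin k),
      fderiv ℝ ExtL (liftExt c m cz τ) ((0, Pi.single α 1), (0, 0), 0)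
        = -ψ α (liftQ c cz τ) := by
    intro τ α
    rw [hExtL, fderiv_extL L hL ψ hψ]
    simp only [liftExt, liftQ]
    simp [Pi.single_apply, ite_mul, Prod.mk_zero_zero]
  have hEmudot : ∀ (τ : ℝ) (α : Fin k),
      fderiv ℝ ExtL (liftExt c m cz τ) ((0, 0), (0, Pi.single α 1), 0) = 0 := by
    intro τ α
    rw [hExtL, fderiv_extL L hL ψ hψ]
    simp [Prod.mk_zero_zero]
  constructor
  · rintro ⟨hq, hmu⟩
    have hcon : ∀ α : Fin k, ∀ t ∈ Icc (0:ℝ) 1, ψ α (liftQ c cz t) = 0 := by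
      intro α t ht
      have h := hmu α t ht
      simp only [hEmu, hEmudot, hEz, zero_mul, add_zero] at h
      have hu := (uniqueDiffOn_Icc (zero_lt_one (α := ℝ))) t ht
      have e1 := h.derivWithin hu
      have e2 := (hasDerivWithinAt_const t (Icc (0:ℝ) 1) (0:ℝ)).derivWithin hu
      have : -ψ α (liftQ c cz t) = 0 := e1.symm.trans e2
      linarith
    refine ⟨hcon, ?_, ?_⟩
    · intro t ht
      have hz : ∀ α, ψ α (c t, derivWithin c (Icc 0 1) t, cz t) = 0 := fun α => by
        simpa [liftQ] using hcon α t ht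
      simpa [hExtL, liftExt, liftQ, hz] using hode t ht
    · intro i t ht
      have h := hq i t ht
      simp only [hEq, hEqdot, hEz] at h
      exact h
  · rintro ⟨hcon, hLode, hq⟩
    constructor
    · intro i t ht
      simp only [hEq, hEqdot, hEz]
      exact hq i t ht
    · intro α t ht
      simp only [hEmu, hEmudot, hEz, zero_mul, add_zero]
      rw [hcon α t ht, neg_zero]
      exact hasDerivWithinAt_const t _ 0
end

section
/- Let X : ℝⁿ × ℝᵐ × ℝ → ℝⁿ and F : ℝⁿ × ℝᵐ × ℝ → ℝ be C² functions of (x, u, z), and define the extended contact Lagrangian 𝓛(x, u, μ, ẋ, u̇, μ̇, z) = F(x, u, z) − Σ_j μ_j (Xʲ(x, u, z) − ẋʲ) on T(ℝⁿ × ℝᵐ × ℝⁿ) × ℝ. Let (x, u, μ) : [0,1] → ℝⁿ × ℝᵐ × ℝⁿ be C² and z : [0,1] → ℝ be C¹ with z'(t) = 𝓛 evaluated along the lifted curve. Then (x, u, μ, z) satisfies the Herglotz equations for 𝓛 in all configuration variables (x, u, μ) if and only if, along (x(t), u(t), z(t)): (i) ẋⁱ(t) = Xⁱ for each i; (ii)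 μ̇_i(t) = μ_i ∂F/∂z − Σ_j μ_j ∂Xʲ/∂xⁱ + ∂F/∂xⁱ − Σ_j μ_i μ_j ∂Xʲ/∂z for each i; (iii) ∂F/∂uᵃ − Σ_j μ_j ∂Xʲ/∂uᵃ = 0 for each a = 1,…,m; and (iv) ż(t) = F(x(t), u(t), z(t)). These are the equations of motion of the Herglotz optimal control problem with control equations ẋ = X(x, u, z) and cost function defined by ż = F(x, u, z), as obtained via Pontryagin's maximum principle. -/
open Set

section Aux

open ContinuousLinearMap

variable {n m : ℕ}

private lemma fderiv_ExtL_apply' (X : (Fin n → ℝ) × (Fin m → ℝ) × ℝ → Fin n → ℝ)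
    (hX : Differentiable ℝ X)
    (F : (Fin n → ℝ) × (Fin m → ℝ) × ℝ → ℝ) (hF : Differentiable ℝ F)
    (p w : ((Fin n → ℝ) × (Fin m → ℝ) × (Fin n → ℝ)) ×
      ((Fin n → ℝ) × (Fin m → ℝ) × (Fin n → ℝ)) × ℝ) :
    fderiv ℝ (fun p : ((Fin n → ℝ) × (Fin m → ℝ) × (Fin n → ℝ)) ×
      ((Fin n → ℝ) × (Fin m → ℝ) × (Fin n → ℝ)) × ℝ =>
      F (p.1.1, p.1.2.1, p.2.2) -
        ∑ j, p.1.2.2 j * (X (p.1.1, p.1.2.1, p.2.2) j - p.2.1.1 j)) p w =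
    fderiv ℝ F (p.1.1, p.1.2.1, p.2.2) (w.1.1, w.1.2.1, w.2.2) -
      ∑ j, (w.1.2.2 j * (X (p.1.1, p.1.2.1, p.2.2) j - p.2.1.1 j) +
        p.1.2.2 j * (fderiv ℝ (fun q => X q j) (p.1.1, p.1.2.1, p.2.2)
          (w.1.1, w.1.2.1, w.2.2) - w.2.1.1 j)) := by
  set q : (Fin n → ℝ) × (Fin m → ℝ) × ℝ := (p.1.1, p.1.2.1, p.2.2) with hq
  have hπ : HasFDerivAt (𝕜 := ℝ) (fun p : ((Fin n → ℝ) × (Fin m → ℝ) × (Fin n → ℝ)) ×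
      ((Fin n → ℝ) × (Fin m → ℝ) × (Fin n → ℝ)) × ℝ => (p.1.1, p.1.2.1, p.2.2))
      (((fst ℝ _ _).comp (fst ℝ _ _)).prod
        (((fst ℝ _ _).comp ((snd ℝ _ _).comp (fst ℝ _ _))).prod
          ((snd ℝ _ _).comp (snd ℝ _ _)))) p :=
    (HasFDerivAt.prodMk (HasFDerivAt.comp p hasFDerivAt_fst hasFDerivAt_fst)
      (HasFDerivAt.prodMk (HasFDerivAt.comp p hasFDerivAt_fst
          (HasFDerivAt.comp p hasFDerivAt_snd hasFDerivAt_fst))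
        (HasFDerivAt.comp p hasFDerivAt_snd hasFDerivAt_snd)))
  have hFc := (hF q).hasFDerivAt.comp p hπ
  have hXj := fun j : Fin n => (differentiableAt_pi.mp (hX q) j).hasFDerivAt.comp p hπ
  have hmu := fun j : Fin n =>
    ((ContinuousLinearMap.proj (R := ℝ) (φ := fun _ : Fin n => ℝ) j).hasFDerivAt).comp p
      (hasFDerivAt_snd.comp p (hasFDerivAt_snd.comp p hasFDerivAt_fst))
  have hv := fun j : Fin n =>
    ((ContinuousLinearMap.proj (R := ℝ) (φ := fun _ : Fin n => ℝ) j).hasFDerivAt).comp p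
      (hasFDerivAt_fst.comp p (hasFDerivAt_fst.comp p hasFDerivAt_snd))
  have htot := hFc.sub (HasFDerivAt.fun_sum (fun j (_ : j ∈ Finset.univ) =>
    (hmu j).mul ((hXj j).sub (hv j))))
  have htot' : HasFDerivAt (fun p : ((Fin n → ℝ) × (Fin m → ℝ) × (Fin n → ℝ)) ×
      ((Fin n → ℝ) × (Fin m → ℝ) × (Fin n → ℝ)) × ℝ =>
      F (p.1.1, p.1.2.1, p.2.2) -
        ∑ j, p.1.2.2 j * (X (p.1.1, p.1.2.1, p.2.2) j - p.2.1.1 j)) _ p := htot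
  rw [htot'.fderiv]
  simp [smul_eq_mul]
  exact Finset.sum_congr rfl fun j _ => by rw [← hq]; ring

end Aux

/-- The lifted curve of the configuration curve `(x, u, μ)` with action `z` in
`T(ℝⁿ × ℝᵐ × ℝⁿ) × ℝ`, the phase space of the extended contact Lagrangian of the
Herglotz optimal control problem. -/
noncomputable def liftCtrl {n m : ℕ} (x : ℝ → Fin n → ℝ) (u : ℝ → Fin m → ℝ)
    (mu : ℝ → Fin n → ℝ) (z : ℝ → ℝ) (t : ℝ) :
    ((Fin n → ℝ) × (Fin m → ℝ) × (Fin n → ℝ)) ×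
      ((Fin n → ℝ) × (Fin m → ℝ) × (Fin n → ℝ)) × ℝ :=
  ((x t, u t, mu t),
   (derivWithin x (Icc 0 1) t, derivWithin u (Icc 0 1) t, derivWithin mu (Icc 0 1) t),
   z t)

/-- The Herglotz optimal control problem as a vakonomic contact system: a curve
`(x, u, μ)` with action `z` satisfying `ż = 𝓛` along the lifted curve, where
`𝓛(x, u, μ, ẋ, u̇, μ̇, z) = F(x, u, z) - Σ_j μ_j (Xʲ(x, u, z) - ẋʲ)`, satisfies the
Herglotz equations of `𝓛` in all configuration variables `(x, u, μ)` if and only if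
(i) `ẋ = X`, (ii) the costate equations for `μ` hold, (iii) `∂F/∂uᵃ - μ_j ∂Xʲ/∂uᵃ = 0`,
and (iv) `ż = F` — the equations of motion of the Herglotz optimal control problem
obtained via Pontryagin's maximum principle. -/
theorem herglotz_optimal_control_iff {n m : ℕ}
    (X : (Fin n → ℝ) × (Fin m → ℝ) × ℝ → Fin n → ℝ) (hX : ContDiff ℝ 2 X)
    (F : (Fin n → ℝ) × (Fin m → ℝ) × ℝ → ℝ) (hF : ContDiff ℝ 2 F)
    (ExtL : ((Fin n → ℝ) × (Fin m → ℝ) × (Fin n → ℝ)) ×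
      ((Fin n → ℝ) × (Fin m → ℝ) × (Fin n → ℝ)) × ℝ → ℝ)
    (hExtL : ExtL = fun p =>
      F (p.1.1, p.1.2.1, p.2.2) -
        ∑ j, p.1.2.2 j * (X (p.1.1, p.1.2.1, p.2.2) j - p.2.1.1 j))
    (x : ℝ → Fin n → ℝ) (u : ℝ → Fin m → ℝ) (mu : ℝ → Fin n → ℝ) (z : ℝ → ℝ)
    (hreg : ContDiffOn ℝ 2 (fun t => (x t, u t, mu t)) (Icc 0 1))
    (hz : ContDiffOn ℝ 1 z (Icc 0 1))
    (hode : ∀ t ∈ Icc (0:ℝ) 1,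
      HasDerivWithinAt z (ExtL (liftCtrl x u mu z t)) (Icc 0 1) t) :
    -- Herglotz equations for 𝓛 in all configuration variables (x, u, μ) ...
    ((∀ i : Fin n, ∀ t ∈ Icc (0:ℝ) 1,
        HasDerivWithinAt
          (fun τ => fderiv ℝ ExtL (liftCtrl x u mu z τ)
            ((0, 0, 0), (Pi.single i 1, 0, 0), 0))
          (fderiv ℝ ExtL (liftCtrl x u mu z t) ((Pi.single i 1, 0, 0), (0, 0, 0), 0) +
            fderiv ℝ ExtL (liftCtrl x u mu z t) ((0, 0, 0), (Pi.single i 1, 0, 0), 0) *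
              fderiv ℝ ExtL (liftCtrl x u mu z t) ((0, 0, 0), (0, 0, 0), 1))
          (Icc 0 1) t) ∧
     (∀ a : Fin m, ∀ t ∈ Icc (0:ℝ) 1,
        HasDerivWithinAt
          (fun τ => fderiv ℝ ExtL (liftCtrl x u mu z τ)
            ((0, 0, 0), (0, Pi.single a 1, 0), 0))
          (fderiv ℝ ExtL (liftCtrl x u mu z t) ((0, Pi.single a 1, 0), (0, 0, 0), 0) +
            fderiv ℝ ExtL (liftCtrl x u mu z t) ((0, 0, 0), (0, Pi.single a 1, 0), 0) *
              fderiv ℝ ExtL (liftCtrl x u mu z t) ((0, 0, 0), (0, 0, 0), 1))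
          (Icc 0 1) t) ∧
     (∀ i : Fin n, ∀ t ∈ Icc (0:ℝ) 1,
        HasDerivWithinAt
          (fun τ => fderiv ℝ ExtL (liftCtrl x u mu z τ)
            ((0, 0, 0), (0, 0, Pi.single i 1), 0))
          (fderiv ℝ ExtL (liftCtrl x u mu z t) ((0, 0, Pi.single i 1), (0, 0, 0), 0) +
            fderiv ℝ ExtL (liftCtrl x u mu z t) ((0, 0, 0), (0, 0, Pi.single i 1), 0) *
              fderiv ℝ ExtL (liftCtrl x u mu z t) ((0, 0, 0), (0, 0, 0), 1))
          (Icc 0 1) t))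
    ↔
    -- ... iff the equations of motion of the Herglotz optimal control problem hold
    ((∀ i : Fin n, ∀ t ∈ Icc (0:ℝ) 1,
        HasDerivWithinAt (fun τ => x τ i) (X (x t, u t, z t) i) (Icc 0 1) t) ∧
     (∀ i : Fin n, ∀ t ∈ Icc (0:ℝ) 1,
        HasDerivWithinAt (fun τ => mu τ i)
          (mu t i * fderiv ℝ F (x t, u t, z t) (0, 0, 1) -
            (∑ j, mu t j *
              fderiv ℝ (fun p => X p j) (x t, u t, z t) (Pi.single i 1, 0, 0)) +
            fderiv ℝ F (x t, u t, z t) (Pi.single i 1, 0, 0) -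
            ∑ j, mu t i * mu t j * fderiv ℝ (fun p => X p j) (x t, u t, z t) (0, 0, 1))
          (Icc 0 1) t) ∧
     (∀ a : Fin m, ∀ t ∈ Icc (0:ℝ) 1,
        fderiv ℝ F (x t, u t, z t) (0, Pi.single a 1, 0) -
          (∑ j, mu t j *
            fderiv ℝ (fun p => X p j) (x t, u t, z t) (0, Pi.single a 1, 0)) = 0) ∧
     (∀ t ∈ Icc (0:ℝ) 1,
        HasDerivWithinAt z (F (x t, u t, z t)) (Icc 0 1) t)) := by
  subst hExtL
  have one_le_two' : (1 : WithTop ℕ∞) ≤ 2 := by norm_num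
  have hXd : Differentiable ℝ X := hX.differentiable two_ne_zero
  have hFd : Differentiable ℝ F := hF.differentiable two_ne_zero
  have hUD : UniqueDiffOn ℝ (Icc (0:ℝ) 1) := uniqueDiffOn_Icc one_pos
  -- basic facts about the curve
  have hxum : ∀ t ∈ Icc (0:ℝ) 1,
      DifferentiableWithinAt ℝ (fun t => (x t, u t, mu t)) (Icc 0 1) t :=
    fun t ht => (hreg.differentiableOn two_ne_zero) t ht
  have hxd : ∀ t ∈ Icc (0:ℝ) 1,
      HasDerivWithinAt x (derivWithin x (Icc 0 1) t) (Icc 0 1) t := by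
    intro t ht
    have : DifferentiableWithinAt ℝ x (Icc 0 1) t := (hxum t ht).fst
    exact this.hasDerivWithinAt
  have hmud : ∀ t ∈ Icc (0:ℝ) 1,
      HasDerivWithinAt mu (derivWithin mu (Icc 0 1) t) (Icc 0 1) t := by
    intro t ht
    have : DifferentiableWithinAt ℝ mu (Icc 0 1) t := (hxum t ht).snd.snd
    exact this.hasDerivWithinAt
  have hxi : ∀ (i : Fin n), ∀ t ∈ Icc (0:ℝ) 1,
      HasDerivWithinAt (fun τ => x τ i) (derivWithin x (Icc 0 1) t i) (Icc 0 1) t :=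
    fun i t ht =>
      (ContinuousLinearMap.proj (R := ℝ) (φ := fun _ : Fin n => ℝ)
        i).hasFDerivAt.comp_hasDerivWithinAt t (hxd t ht)
  have hmui : ∀ (i : Fin n), ∀ t ∈ Icc (0:ℝ) 1,
      HasDerivWithinAt (fun τ => mu τ i) (derivWithin mu (Icc 0 1) t i) (Icc 0 1) t :=
    fun i t ht =>
      (ContinuousLinearMap.proj (R := ℝ) (φ := fun _ : Fin n => ℝ)
        i).hasFDerivAt.comp_hasDerivWithinAt t (hmud t ht)
  have huniq : ∀ t ∈ Icc (0:ℝ) 1, ∀ (f : ℝ → ℝ) (a b : ℝ),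
      HasDerivWithinAt f a (Icc 0 1) t → HasDerivWithinAt f b (Icc 0 1) t → a = b := by
    intro t ht f a b h1 h2
    rw [← h1.derivWithin (hUD t ht), ← h2.derivWithin (hUD t ht)]
  -- the directional derivative evaluations along the lifted curve
  have fd := fderiv_ExtL_apply' X hXd F hFd
  have e1 : ∀ (i : Fin n) (t : ℝ),
      fderiv ℝ (fun p : ((Fin n → ℝ) × (Fin m → ℝ) × (Fin n → ℝ)) ×
        ((Fin n → ℝ) × (Fin m → ℝ) × (Fin n → ℝ)) × ℝ =>
        F (p.1.1, p.1.2.1, p.2.2) -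
          ∑ j, p.1.2.2 j * (X (p.1.1, p.1.2.1, p.2.2) j - p.2.1.1 j))
        (liftCtrl x u mu z t) ((Pi.single i 1, 0, 0), (0, 0, 0), 0) =
      fderiv ℝ F (x t, u t, z t) (Pi.single i 1, 0, 0) -
        ∑ j, mu t j * fderiv ℝ (fun q => X q j) (x t, u t, z t)
          (Pi.single i 1, 0, 0) := by
    intro i t; rw [fd]; simp [liftCtrl]
  have e2 : ∀ (i : Fin n) (t : ℝ),
      fderiv ℝ (fun p : ((Fin n → ℝ) × (Fin m → ℝ) × (Fin n → ℝ)) ×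
        ((Fin n → ℝ) × (Fin m → ℝ) × (Fin n → ℝ)) × ℝ =>
        F (p.1.1, p.1.2.1, p.2.2) -
          ∑ j, p.1.2.2 j * (X (p.1.1, p.1.2.1, p.2.2) j - p.2.1.1 j))
        (liftCtrl x u mu z t) ((0, 0, 0), (Pi.single i 1, 0, 0), 0) = mu t i := by
    intro i t; rw [fd]; simp [liftCtrl, Prod.mk_zero_zero, Pi.single_apply, mul_ite]
  have e3 : ∀ (t : ℝ),
      fderiv ℝ (fun p : ((Fin n → ℝ) × (Fin m → ℝ) × (Fin n → ℝ)) ×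
        ((Fin n → ℝ) × (Fin m → ℝ) × (Fin n → ℝ)) × ℝ =>
        F (p.1.1, p.1.2.1, p.2.2) -
          ∑ j, p.1.2.2 j * (X (p.1.1, p.1.2.1, p.2.2) j - p.2.1.1 j))
        (liftCtrl x u mu z t) ((0, 0, 0), (0, 0, 0), 1) =
      fderiv ℝ F (x t, u t, z t) (0, 0, 1) -
        ∑ j, mu t j * fderiv ℝ (fun q => X q j) (x t, u t, z t) (0, 0, 1) := by
    intro t; rw [fd]; simp [liftCtrl]
  have e4 : ∀ (a : Fin m) (t : ℝ),
      fderiv ℝ (fun p : ((Fin n → ℝ) × (Fin m → ℝ) × (Fin n → ℝ)) ×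
        ((Fin n → ℝ) × (Fin m → ℝ) × (Fin n → ℝ)) × ℝ =>
        F (p.1.1, p.1.2.1, p.2.2) -
          ∑ j, p.1.2.2 j * (X (p.1.1, p.1.2.1, p.2.2) j - p.2.1.1 j))
        (liftCtrl x u mu z t) ((0, Pi.single a 1, 0), (0, 0, 0), 0) =
      fderiv ℝ F (x t, u t, z t) (0, Pi.single a 1, 0) -
        ∑ j, mu t j * fderiv ℝ (fun q => X q j) (x t, u t, z t)
          (0, Pi.single a 1, 0) := by
    intro a t; rw [fd]; simp [liftCtrl]
  have e5 : ∀ (a : Fin m) (t : ℝ),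
      fderiv ℝ (fun p : ((Fin n → ℝ) × (Fin m → ℝ) × (Fin n → ℝ)) ×
        ((Fin n → ℝ) × (Fin m → ℝ) × (Fin n → ℝ)) × ℝ =>
        F (p.1.1, p.1.2.1, p.2.2) -
          ∑ j, p.1.2.2 j * (X (p.1.1, p.1.2.1, p.2.2) j - p.2.1.1 j))
        (liftCtrl x u mu z t) ((0, 0, 0), (0, Pi.single a 1, 0), 0) = 0 := by
    intro a t; rw [fd]; simp [liftCtrl, Prod.mk_zero_zero]
  have e6 : ∀ (i : Fin n) (t : ℝ),
      fderiv ℝ (fun p : ((Fin n → ℝ) × (Fin m → ℝ) × (Fin n → ℝ)) ×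
        ((Fin n → ℝ) × (Fin m → ℝ) × (Fin n → ℝ)) × ℝ =>
        F (p.1.1, p.1.2.1, p.2.2) -
          ∑ j, p.1.2.2 j * (X (p.1.1, p.1.2.1, p.2.2) j - p.2.1.1 j))
        (liftCtrl x u mu z t) ((0, 0, Pi.single i 1), (0, 0, 0), 0) =
      derivWithin x (Icc 0 1) t i - X (x t, u t, z t) i := by
    intro i t; rw [fd]
    simp [liftCtrl, Prod.mk_zero_zero, Pi.single_apply, ite_mul, Finset.sum_ite_eq']
  have e7 : ∀ (i : Fin n) (t : ℝ),
      fderiv ℝ (fun p : ((Fin n → ℝ) × (Fin m → ℝ) × (Fin n → ℝ)) ×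
        ((Fin n → ℝ) × (Fin m → ℝ) × (Fin n → ℝ)) × ℝ =>
        F (p.1.1, p.1.2.1, p.2.2) -
          ∑ j, p.1.2.2 j * (X (p.1.1, p.1.2.1, p.2.2) j - p.2.1.1 j))
        (liftCtrl x u mu z t) ((0, 0, 0), (0, 0, Pi.single i 1), 0) = 0 := by
    intro i t; rw [fd]; simp [liftCtrl, Prod.mk_zero_zero]
  constructor
  · rintro ⟨H1, H2, H3⟩
    -- (i): from the μ-equations
    have hxeq : ∀ (i : Fin n), ∀ t ∈ Icc (0:ℝ) 1,
        derivWithin x (Icc 0 1) t i = X (x t, u t, z t) i := by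
      intro i t ht
      have h := H3 i t ht
      rw [show (fun τ => fderiv ℝ (fun p : ((Fin n → ℝ) × (Fin m → ℝ) × (Fin n → ℝ)) ×
        ((Fin n → ℝ) × (Fin m → ℝ) × (Fin n → ℝ)) × ℝ =>
        F (p.1.1, p.1.2.1, p.2.2) -
          ∑ j, p.1.2.2 j * (X (p.1.1, p.1.2.1, p.2.2) j - p.2.1.1 j))
        (liftCtrl x u mu z τ) ((0, 0, 0), (0, 0, Pi.single i 1), 0)) = fun _ => (0:ℝ)
        from funext fun τ => e7 i τ, e6 i t, e7 i t] at h
      have h0 : (0:ℝ) = derivWithin x (Icc 0 1) t i - X (x t, u t, z t) i +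
          0 * fderiv ℝ (fun p : ((Fin n → ℝ) × (Fin m → ℝ) × (Fin n → ℝ)) ×
            ((Fin n → ℝ) × (Fin m → ℝ) × (Fin n → ℝ)) × ℝ =>
            F (p.1.1, p.1.2.1, p.2.2) -
              ∑ j, p.1.2.2 j * (X (p.1.1, p.1.2.1, p.2.2) j - p.2.1.1 j))
            (liftCtrl x u mu z t) ((0, 0, 0), (0, 0, 0), 1) :=
        huniq t ht _ _ _ (hasDerivWithinAt_const t _ 0) h
      rw [zero_mul, add_zero] at h0
      linarith
    have hi : ∀ (i : Fin n), ∀ t ∈ Icc (0:ℝ) 1,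
        HasDerivWithinAt (fun τ => x τ i) (X (x t, u t, z t) i) (Icc 0 1) t := by
      intro i t ht
      have := hxi i t ht
      rwa [hxeq i t ht] at this
    refine ⟨hi, ?_, ?_, ?_⟩
    · -- (ii)
      intro i t ht
      have h := H1 i t ht
      rw [show (fun τ => fderiv ℝ (fun p : ((Fin n → ℝ) × (Fin m → ℝ) × (Fin n → ℝ)) ×
        ((Fin n → ℝ) × (Fin m → ℝ) × (Fin n → ℝ)) × ℝ =>
        F (p.1.1, p.1.2.1, p.2.2) -
          ∑ j, p.1.2.2 j * (X (p.1.1, p.1.2.1, p.2.2) j - p.2.1.1 j))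
        (liftCtrl x u mu z τ) ((0, 0, 0), (Pi.single i 1, 0, 0), 0)) = fun τ => mu τ i
        from funext fun τ => e2 i τ, e1 i t, e2 i t, e3 t] at h
      convert h using 1
      rw [mul_sub, Finset.mul_sum,
        show (∑ j, mu t i * (mu t j * fderiv ℝ (fun q => X q j) (x t, u t, z t) (0, 0, 1))) =
          ∑ j, mu t i * mu t j * fderiv ℝ (fun p => X p j) (x t, u t, z t) (0, 0, 1)
          from Finset.sum_congr rfl fun j _ => (mul_assoc _ _ _).symm]
      ring
    · -- (iii)
      intro a t ht
      have h := H2 a t ht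
      rw [show (fun τ => fderiv ℝ (fun p : ((Fin n → ℝ) × (Fin m → ℝ) × (Fin n → ℝ)) ×
        ((Fin n → ℝ) × (Fin m → ℝ) × (Fin n → ℝ)) × ℝ =>
        F (p.1.1, p.1.2.1, p.2.2) -
          ∑ j, p.1.2.2 j * (X (p.1.1, p.1.2.1, p.2.2) j - p.2.1.1 j))
        (liftCtrl x u mu z τ) ((0, 0, 0), (0, Pi.single a 1, 0), 0)) = fun _ => (0:ℝ)
        from funext fun τ => e5 a τ, e4 a t, e5 a t, e3 t] at h
      have h0 := huniq t ht _ _ _ (hasDerivWithinAt_const t _ 0) h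
      rw [zero_mul, add_zero] at h0
      linarith
    · -- (iv)
      intro t ht
      have h := hode t ht
      have : (fun p : ((Fin n → ℝ) × (Fin m → ℝ) × (Fin n → ℝ)) ×
          ((Fin n → ℝ) × (Fin m → ℝ) × (Fin n → ℝ)) × ℝ =>
          F (p.1.1, p.1.2.1, p.2.2) -
            ∑ j, p.1.2.2 j * (X (p.1.1, p.1.2.1, p.2.2) j - p.2.1.1 j))
          (liftCtrl x u mu z t) = F (x t, u t, z t) := by
        simp only [liftCtrl]
        rw [show ∑ j, mu t j * (X (x t, u t, z t) j - derivWithin x (Icc 0 1) t j) = 0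
          from Finset.sum_eq_zero fun j _ => by rw [hxeq j t ht]; ring]
        ring
      rwa [this] at h
  · rintro ⟨H1, H2, H3, H4⟩
    have hxeq : ∀ (i : Fin n), ∀ t ∈ Icc (0:ℝ) 1,
        derivWithin x (Icc 0 1) t i = X (x t, u t, z t) i :=
      fun i t ht => huniq t ht _ _ _ (hxi i t ht) (H1 i t ht)
    refine ⟨?_, ?_, ?_⟩
    · -- Herglotz eq in x
      intro i t ht
      rw [show (fun τ => fderiv ℝ (fun p : ((Fin n → ℝ) × (Fin m → ℝ) × (Fin n → ℝ)) ×
        ((Fin n → ℝ) × (Fin m → ℝ) × (Fin n → ℝ)) × ℝ =>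
        F (p.1.1, p.1.2.1, p.2.2) -
          ∑ j, p.1.2.2 j * (X (p.1.1, p.1.2.1, p.2.2) j - p.2.1.1 j))
        (liftCtrl x u mu z τ) ((0, 0, 0), (Pi.single i 1, 0, 0), 0)) = fun τ => mu τ i
        from funext fun τ => e2 i τ, e1 i t, e2 i t, e3 t]
      have h := H2 i t ht
      convert h using 1
      rw [mul_sub, Finset.mul_sum,
        show (∑ j, mu t i * (mu t j * fderiv ℝ (fun q => X q j) (x t, u t, z t) (0, 0, 1))) =
          ∑ j, mu t i * mu t j * fderiv ℝ (fun p => X p j) (x t, u t, z t) (0, 0, 1)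
          from Finset.sum_congr rfl fun j _ => (mul_assoc _ _ _).symm]
      ring
    · -- Herglotz eq in u
      intro a t ht
      rw [show (fun τ => fderiv ℝ (fun p : ((Fin n → ℝ) × (Fin m → ℝ) × (Fin n → ℝ)) ×
        ((Fin n → ℝ) × (Fin m → ℝ) × (Fin n → ℝ)) × ℝ =>
        F (p.1.1, p.1.2.1, p.2.2) -
          ∑ j, p.1.2.2 j * (X (p.1.1, p.1.2.1, p.2.2) j - p.2.1.1 j))
        (liftCtrl x u mu z τ) ((0, 0, 0), (0, Pi.single a 1, 0), 0)) = fun _ => (0:ℝ)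
        from funext fun τ => e5 a τ, e4 a t, e5 a t]
      rw [zero_mul, add_zero, H3 a t ht]
      exact hasDerivWithinAt_const t _ 0
    · -- Herglotz eq in μ
      intro i t ht
      rw [show (fun τ => fderiv ℝ (fun p : ((Fin n → ℝ) × (Fin m → ℝ) × (Fin n → ℝ)) ×
        ((Fin n → ℝ) × (Fin m → ℝ) × (Fin n → ℝ)) × ℝ =>
        F (p.1.1, p.1.2.1, p.2.2) -
          ∑ j, p.1.2.2 j * (X (p.1.1, p.1.2.1, p.2.2) j - p.2.1.1 j))
        (liftCtrl x u mu z τ) ((0, 0, 0), (0, 0, Pi.single i 1), 0)) = fun _ => (0:ℝ)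
        from funext fun τ => e7 i τ, e6 i t, e7 i t]
      rw [zero_mul, add_zero, hxeq i t ht, sub_self]
      exact hasDerivWithinAt_const t _ 0
end
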